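/- For every integer m ≥ 2 and every integer k ≥ 1, the set A_k is an open subset of Δ_m × 𝔖_m and has positive measure with respect to the product measure on Δ_m × 𝔖_m. -/
import Mathlib


open Set MeasureTheory Filter

/-- `IsIETm b m E` : `E` is an interval exchange transformation of `[0,b)` with `m` intervals:
`E` maps `[0,b)` bijectively onto itself, there are points
`0 = a 1 < a 2 < ⋯ < a m < a (m+1) = b` such that on each `[a i, a (i+1))` the map `E` is the
translation `x ↦ E (a i) + x - a i`, and `E` (as a map of `[0,b)`) is discontinuous exactly at
`a 2, …, a m`. -/
def IsIETm (b : ℝ) (m : ℕ) (E : ℝ → ℝ) : Prop :=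
  0 < b ∧ 1 ≤ m ∧ Set.BijOn E (Set.Ico 0 b) (Set.Ico 0 b) ∧
  ∃ a : ℕ → ℝ,
    a 1 = 0 ∧ a (m + 1) = b ∧
    (∀ i, 1 ≤ i → i ≤ m → a i < a (i + 1)) ∧
    (∀ i, 1 ≤ i → i ≤ m → ∀ x ∈ Set.Ico (a i) (a (i + 1)), E x = E (a i) + x - a i) ∧
    (∀ x ∈ Set.Ico (0 : ℝ) b,
      (¬ ContinuousWithinAt E (Set.Ico 0 b) x ↔ ∃ i, 2 ≤ i ∧ i ≤ m ∧ x = a i))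

/-- `E` is an interval exchange transformation of `[0,b)` (with some number of intervals). -/
def IsIET (b : ℝ) (E : ℝ → ℝ) : Prop := ∃ m, IsIETm b m E

/-- The closed interval `[s,t] ⊆ [0,b)` is a virtual orthogonal edge for the
iet `E : [0,b) → [0,b)` : the restriction of `E` to `[s,t]` is continuous and
`s < E s < E (E s) = t`. -/
def VirtOrthEdge (b : ℝ) (E : ℝ → ℝ) (s t : ℝ) : Prop :=
  0 ≤ s ∧ t < b ∧ ContinuousOn E (Set.Icc s t) ∧
  s < E s ∧ E s < E (E s) ∧ E (E s) = t

/-- `E : [0,b) → [0,b)` has at least `N` pairwise disjoint virtual orthogonal edges. -/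
def HasDisjointEdges (b : ℝ) (E : ℝ → ℝ) (N : ℕ) : Prop :=
  ∃ s t : Fin N → ℝ,
    (∀ i, VirtOrthEdge b E (s i) (t i)) ∧
    (∀ i j, i ≠ j → Disjoint (Set.Icc (s i) (t i)) (Set.Icc (s j) (t j)))

/-- The first-return time of `x` to `[0,b)` under `E` : the least `j ≥ 1` with `E^[j] x ∈ [0,b)`. -/
noncomputable def returnTime (E : ℝ → ℝ) (b x : ℝ) : ℕ :=
  sInf {j : ℕ | 1 ≤ j ∧ E^[j] x ∈ Set.Ico 0 b}

/-- The first-return map (induced map) of `E` on `[0,b)`. -/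
noncomputable def inducedMap (E : ℝ → ℝ) (b : ℝ) (x : ℝ) : ℝ :=
  E^[returnTime E b x] x

/-- `E` belongs to `ℬ k` : there is a sequence `bₙ → 0` in `(0,1)` such that for every `n`
the induced iet of `E` on `[0, bₙ)` has at least `k` pairwise disjoint virtual
orthogonal edges. -/
def MemBk (k : ℕ) (E : ℝ → ℝ) : Prop :=
  ∃ bseq : ℕ → ℝ,
    (∀ n, bseq n ∈ Set.Ioo (0 : ℝ) 1) ∧
    Filter.Tendsto bseq Filter.atTop (nhds 0) ∧
    ∀ n, HasDisjointEdges (bseq n) (inducedMap E (bseq n)) k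

/-- `E` belongs to `ℬ = ⋂_{k ≥ 1} ℬ k`. -/
def MemB (E : ℝ → ℝ) : Prop := ∀ k, 1 ≤ k → MemBk k E

/-- The left endpoint `a i = ∑_{j < i} λ j` of the `i`-th interval. -/
noncomputable def leftEndpoint (m : ℕ) (lam : Fin m → ℝ) (i : Fin m) : ℝ :=
  ∑ j ∈ Finset.univ.filter (fun j => j < i), lam j

/-- The left endpoint `∑_{π j < π i} λ j` of the image of the `i`-th interval. -/
noncomputable def imageLeftEndpoint (m : ℕ) (lam : Fin m → ℝ) (π : Equiv.Perm (Fin m))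
    (i : Fin m) : ℝ :=
  ∑ j ∈ Finset.univ.filter (fun j => π j < π i), lam j

open Classical in
/-- The interval exchange transformation associated with the pair `(λ, π)` : on the `i`-th
interval `[a i, a i + λ i)` it is the translation taking `a i` to `∑_{π j < π i} λ j`. -/
noncomputable def ietOf (m : ℕ) (lam : Fin m → ℝ) (π : Equiv.Perm (Fin m)) (x : ℝ) : ℝ :=
  x + ∑ i : Fin m,
    (if leftEndpoint m lam i ≤ x ∧ x < leftEndpoint m lam i + lam i
      then imageLeftEndpoint m lam π i - leftEndpoint m lam i else 0)

/-- The open simplex `Δ_m` of positive probability vectors in `ℝ^m`. -/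
def posSimplex (m : ℕ) : Set (Fin m → ℝ) :=
  {lam | (∀ i, 0 < lam i) ∧ ∑ i, lam i = 1}

/-- The parametrization of (a superset of) `Δ_m` by its first `m - 1` coordinates; the last
coordinate is `1` minus the sum of the others.  It identifies the set
`{v ∈ ℝ^{m-1} | ∀ i, v i > 0, ∑ v i < 1}`, carrying `(m-1)`-dimensional Lebesgue measure,
with `Δ_m`. -/
def completeVec (m : ℕ) (v : Fin (m - 1) → ℝ) : Fin m → ℝ :=
  fun i => if h : (i : ℕ) < m - 1 then v ⟨i, h⟩ else 1 - ∑ j, v j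

/-- `E` belongs to `A_k` : for some `a ∈ (16⁻ᵏ - 32⁻ᵏ, 16⁻ᵏ + 32⁻ᵏ)`, `E x = a + x`
for all `x ∈ [0, 1/2]`. -/
def MemAk (k : ℕ) (E : ℝ → ℝ) : Prop :=
  ∃ a ∈ Set.Ioo ((16 : ℝ)⁻¹ ^ k - (32 : ℝ)⁻¹ ^ k) ((16 : ℝ)⁻¹ ^ k + (32 : ℝ)⁻¹ ^ k),
    ∀ x ∈ Set.Icc (0 : ℝ) (1 / 2), E x = a + x

instance (n : ℕ) : MeasurableSpace (Equiv.Perm (Fin n)) := ⊤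

instance (n : ℕ) : MeasurableSingletonClass (Equiv.Perm (Fin n)) :=
  ⟨fun _ => MeasurableSpace.measurableSet_top⟩

instance (n : ℕ) : TopologicalSpace (Equiv.Perm (Fin n)) := ⊥

instance (n : ℕ) : DiscreteTopology (Equiv.Perm (Fin n)) := ⟨rfl⟩

section Aux
variable {m : ℕ}

noncomputable def lamN (m : ℕ) (lam : Fin m → ℝ) (n : ℕ) : ℝ :=
  if h : n < m then lam ⟨n, h⟩ else 0

noncomputable def LN (m : ℕ) (lam : Fin m → ℝ) (n : ℕ) : ℝ :=
  ∑ j ∈ Finset.range n, lamN m lam j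

noncomputable def cN (m : ℕ) (lam : Fin m → ℝ) (π : Equiv.Perm (Fin m)) (n : ℕ) : ℝ :=
  if h : n < m then
    imageLeftEndpoint m lam π ⟨n, h⟩ - leftEndpoint m lam ⟨n, h⟩ else 0

lemma LN_filter (lam : Fin m → ℝ) {n : ℕ} (hn : n ≤ m) :
    LN m lam n = ∑ j ∈ Finset.univ.filter (fun j : Fin m => (j : ℕ) < n), lam j := by
  classical
  have h1 : LN m lam n = ∑ j ∈ (Finset.range m).filter (· < n), lamN m lam j := by
    unfold LN
    congr 1
    ext j
    simp only [Finset.mem_range, Finset.mem_filter]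
    omega
  rw [h1, Finset.sum_filter, Finset.sum_filter,
    ← Fin.sum_univ_eq_sum_range (fun j => if j < n then lamN m lam j else 0) m]
  refine Finset.sum_congr rfl fun j _ => ?_
  by_cases h : (j : ℕ) < n <;> simp only [h, if_true, if_false, lamN, j.isLt, dif_pos, Fin.eta]

lemma leftEndpoint_eq (lam : Fin m → ℝ) (i : Fin m) :
    leftEndpoint m lam i = LN m lam i := by
  rw [LN_filter lam (le_of_lt i.isLt)]
  unfold leftEndpoint
  refine Finset.sum_congr ?_ fun _ _ => rfl
  ext j
  simp only [Finset.mem_filter, Finset.mem_univ, true_and, Fin.lt_def]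

lemma imageLeftEndpoint_eq (lam : Fin m → ℝ) (π : Equiv.Perm (Fin m)) (i : Fin m) :
    imageLeftEndpoint m lam π i = LN m (lam ∘ π.symm) (π i) := by
  classical
  rw [LN_filter (lam ∘ π.symm) (le_of_lt (π i).isLt)]
  unfold imageLeftEndpoint
  refine Finset.sum_equiv π (fun j => ?_) (fun j _ => ?_)
  · simp only [Finset.mem_filter, Finset.mem_univ, true_and, Fin.lt_def]
  · simp

lemma cN_eq (lam : Fin m → ℝ) (π : Equiv.Perm (Fin m)) {n : ℕ} (h : n < m) :
    cN m lam π n = LN m (lam ∘ π.symm) (π ⟨n, h⟩) - LN m lam n := by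
  unfold cN
  rw [dif_pos h, imageLeftEndpoint_eq, leftEndpoint_eq]

lemma lamN_nonneg {lam : Fin m → ℝ} (hpos : ∀ i, 0 < lam i) (n : ℕ) : 0 ≤ lamN m lam n := by
  unfold lamN; split
  · exact (hpos _).le
  · rfl

lemma LN_succ (lam : Fin m → ℝ) (n : ℕ) : LN m lam (n + 1) = LN m lam n + lamN m lam n := by
  unfold LN; rw [Finset.sum_range_succ]

lemma LN_mono {lam : Fin m → ℝ} (hpos : ∀ i, 0 < lam i) {a b : ℕ} (hab : a ≤ b) :
    LN m lam a ≤ LN m lam b := by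
  unfold LN
  exact Finset.sum_le_sum_of_subset_of_nonneg (Finset.range_subset_range.2 hab)
    (fun j _ _ => lamN_nonneg hpos j)

lemma LN_nonneg {lam : Fin m → ℝ} (hpos : ∀ i, 0 < lam i) (n : ℕ) : 0 ≤ LN m lam n := by
  have := LN_mono (lam := lam) hpos (Nat.zero_le n)
  simpa [LN] using this

lemma LN_lt {lam : Fin m → ℝ} (hpos : ∀ i, 0 < lam i) {n : ℕ} (h : n < m) :
    LN m lam n < LN m lam (n + 1) := by
  rw [LN_succ]
  have : 0 < lamN m lam n := by unfold lamN; rw [dif_pos h]; exact hpos _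
  linarith

lemma LN_top {lam : Fin m → ℝ} (hsum : ∑ i, lam i = 1) : LN m lam m = 1 := by
  unfold LN
  rw [← Fin.sum_univ_eq_sum_range (lamN m lam) m, ← hsum]
  refine Finset.sum_congr rfl fun j _ => ?_
  simp [lamN, j.isLt]

lemma LN_le_one {lam : Fin m → ℝ} (hpos : ∀ i, 0 < lam i) (hsum : ∑ i, lam i = 1)
    {n : ℕ} (hn : n ≤ m) : LN m lam n ≤ 1 := by
  rw [← LN_top hsum]; exact LN_mono hpos hn

lemma exists_between_partial (f : ℕ → ℝ) {x : ℝ} (m : ℕ) (h0 : f 0 ≤ x) (hm : x < f m) :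
    ∃ n < m, f n ≤ x ∧ x < f (n + 1) := by
  induction m with
  | zero => exact absurd hm (not_lt.2 h0)
  | succ M ih =>
    by_cases h : x < f M
    · obtain ⟨n, hn, h1, h2⟩ := ih h
      exact ⟨n, Nat.lt_succ_of_lt hn, h1, h2⟩
    · exact ⟨M, Nat.lt_succ_self M, not_lt.1 h, hm⟩

lemma exists_interval {lam : Fin m → ℝ} (hsum : ∑ i, lam i = 1) {x : ℝ}
    (hx : x ∈ Set.Ico (0:ℝ) 1) :
    ∃ n < m, LN m lam n ≤ x ∧ x < LN m lam (n + 1) := by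
  refine exists_between_partial (LN m lam) m ?_ ?_
  · simpa [LN] using hx.1
  · rw [LN_top hsum]; exact hx.2

lemma interval_unique {lam : Fin m → ℝ} (hpos : ∀ i, 0 < lam i) {n n' : ℕ} {x : ℝ}
    (h1 : LN m lam n ≤ x) (h2 : x < LN m lam (n + 1))
    (h1' : LN m lam n' ≤ x) (h2' : x < LN m lam (n' + 1)) : n = n' := by
  by_contra hne
  rcases Nat.lt_or_ge n n' with h | h
  · have : LN m lam (n+1) ≤ LN m lam n' := LN_mono hpos h
    linarith
  · have hlt : n' < n := lt_of_le_of_ne h (Ne.symm hne)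
    have : LN m lam (n'+1) ≤ LN m lam n := LN_mono hpos hlt
    linarith

end Aux
section Eval
variable {m : ℕ}

lemma lamN_val (lam : Fin m → ℝ) (j : Fin m) : lamN m lam (j : ℕ) = lam j := by
  unfold lamN; rw [dif_pos j.isLt]

lemma ietOf_eval {lam : Fin m → ℝ} (hpos : ∀ i, 0 < lam i) (π : Equiv.Perm (Fin m))
    {n : ℕ} (hn : n < m) {x : ℝ} (h1 : LN m lam n ≤ x) (h2 : x < LN m lam (n + 1)) :
    ietOf m lam π x = x + cN m lam π n := by
  classical
  unfold ietOf
  congr 1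
  rw [Finset.sum_eq_single_of_mem (⟨n, hn⟩ : Fin m) (Finset.mem_univ _)]
  · rw [if_pos, cN, dif_pos hn]
    constructor
    · rwa [leftEndpoint_eq]
    · rw [leftEndpoint_eq]
      have : lam ⟨n, hn⟩ = lamN m lam n := (lamN_val lam ⟨n, hn⟩).symm
      rw [this, ← LN_succ]
      exact h2
  · intro j _ hj
    rw [if_neg]
    rintro ⟨hj1, hj2⟩
    rw [leftEndpoint_eq] at hj1 hj2
    rw [← lamN_val lam j, ← LN_succ] at hj2
    exact hj (Fin.ext (interval_unique hpos hj1 hj2 h1 h2))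

lemma mu_pos {lam : Fin m → ℝ} (hpos : ∀ i, 0 < lam i) (π : Equiv.Perm (Fin m)) :
    ∀ i, 0 < (lam ∘ π.symm) i := fun _ => hpos _

lemma mu_sum {lam : Fin m → ℝ} (hsum : ∑ i, lam i = 1) (π : Equiv.Perm (Fin m)) :
    ∑ i, (lam ∘ π.symm) i = 1 := by
  rw [← hsum]; exact Equiv.sum_comp π.symm lam

-- the image of the n-th interval under translation by cN n is the (π n)-th μ-interval
lemma ietOf_mem_image {lam : Fin m → ℝ} (hpos : ∀ i, 0 < lam i) (π : Equiv.Perm (Fin m))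
    {n : ℕ} (hn : n < m) {x : ℝ} (h1 : LN m lam n ≤ x) (h2 : x < LN m lam (n + 1)) :
    LN m (lam ∘ π.symm) ((π ⟨n, hn⟩ : Fin m) : ℕ) ≤ ietOf m lam π x ∧
      ietOf m lam π x < LN m (lam ∘ π.symm) (((π ⟨n, hn⟩ : Fin m) : ℕ) + 1) := by
  rw [ietOf_eval hpos π hn h1 h2, cN_eq lam π hn]
  rw [LN_succ] at h2 ⊢
  have hμ : lamN m (lam ∘ π.symm) ((π ⟨n, hn⟩ : Fin m) : ℕ) = lamN m lam n := by
    rw [lamN_val]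
    simp only [Function.comp_apply, Equiv.symm_apply_apply]
    exact (lamN_val lam ⟨n, hn⟩).symm
  constructor
  · linarith
  · rw [hμ]; linarith

end Eval
section Bij
variable {m : ℕ}

lemma ietOf_mapsTo {lam : Fin m → ℝ} (hpos : ∀ i, 0 < lam i) (hsum : ∑ i, lam i = 1)
    (π : Equiv.Perm (Fin m)) :
    Set.MapsTo (ietOf m lam π) (Set.Ico 0 1) (Set.Ico 0 1) := by
  intro x hx
  obtain ⟨n, hn, h1, h2⟩ := exists_interval hsum hx
  obtain ⟨g1, g2⟩ := ietOf_mem_image hpos π hn h1 h2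
  have hμpos := mu_pos hpos π
  have hμsum := mu_sum hsum π
  constructor
  · exact le_trans (LN_nonneg hμpos _) g1
  · exact lt_of_lt_of_le g2 (LN_le_one hμpos hμsum (π ⟨n, hn⟩).isLt)

lemma ietOf_injOn {lam : Fin m → ℝ} (hpos : ∀ i, 0 < lam i) (hsum : ∑ i, lam i = 1)
    (π : Equiv.Perm (Fin m)) :
    Set.InjOn (ietOf m lam π) (Set.Ico 0 1) := by
  intro x hx y hy hxy
  obtain ⟨n, hn, h1, h2⟩ := exists_interval hsum hx
  obtain ⟨n', hn', h1', h2'⟩ := exists_interval hsum hy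
  obtain ⟨g1, g2⟩ := ietOf_mem_image hpos π hn h1 h2
  obtain ⟨g1', g2'⟩ := ietOf_mem_image hpos π hn' h1' h2'
  rw [hxy] at g1 g2
  have hμpos := mu_pos hpos π
  have hv : ((π ⟨n, hn⟩ : Fin m) : ℕ) = ((π ⟨n', hn'⟩ : Fin m) : ℕ) :=
    interval_unique hμpos g1 g2 g1' g2'
  have hnn' : n = n' := by
    have : (⟨n, hn⟩ : Fin m) = ⟨n', hn'⟩ := π.injective (Fin.ext hv)
    exact congrArg Fin.val this
  subst hnn'
  rw [ietOf_eval hpos π hn h1 h2, ietOf_eval hpos π hn h1' h2'] at hxy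
  linarith

lemma ietOf_surjOn {lam : Fin m → ℝ} (hpos : ∀ i, 0 < lam i) (hsum : ∑ i, lam i = 1)
    (π : Equiv.Perm (Fin m)) :
    Set.SurjOn (ietOf m lam π) (Set.Ico 0 1) (Set.Ico 0 1) := by
  intro y hy
  have hμpos := mu_pos hpos π
  have hμsum := mu_sum hsum π
  obtain ⟨n', hn', h1', h2'⟩ := exists_interval hμsum hy
  set i : Fin m := π.symm ⟨n', hn'⟩ with hi
  have hn : (i : ℕ) < m := i.isLt
  have hπi : π ⟨(i : ℕ), hn⟩ = ⟨n', hn'⟩ := by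
    rw [Fin.eta, hi, Equiv.apply_symm_apply]
  set x : ℝ := y - cN m lam π i with hxdef
  have hc : cN m lam π (i : ℕ) = LN m (lam ∘ π.symm) n' - LN m lam (i : ℕ) := by
    rw [cN_eq lam π hn, hπi]
  have hlamμ : lamN m (lam ∘ π.symm) n' = lamN m lam (i : ℕ) := by
    have e1 : lamN m (lam ∘ π.symm) n' = (lam ∘ π.symm) ⟨n', hn'⟩ := lamN_val _ ⟨n', hn'⟩
    rw [e1, lamN_val]
    rfl
  rw [LN_succ, hlamμ] at h2'
  have hx1 : LN m lam (i : ℕ) ≤ x := by rw [hxdef, hc]; linarith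
  have hx2 : x < LN m lam ((i : ℕ) + 1) := by rw [hxdef, hc, LN_succ]; linarith
  have hxI : x ∈ Set.Ico (0:ℝ) 1 := by
    constructor
    · exact le_trans (LN_nonneg hpos _) hx1
    · exact lt_of_lt_of_le hx2 (LN_le_one hpos hsum hn)
  refine ⟨x, hxI, ?_⟩
  rw [ietOf_eval hpos π hn hx1 hx2, hxdef]
  ring

lemma ietOf_bijOn {lam : Fin m → ℝ} (hpos : ∀ i, 0 < lam i) (hsum : ∑ i, lam i = 1)
    (π : Equiv.Perm (Fin m)) :
    Set.BijOn (ietOf m lam π) (Set.Ico 0 1) (Set.Ico 0 1) :=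
  ⟨ietOf_mapsTo hpos hsum π, ietOf_injOn hpos hsum π, ietOf_surjOn hpos hsum π⟩

end Bij
section Cont
variable {m : ℕ}

lemma LN_zero (lam : Fin m → ℝ) : LN m lam 0 = 0 := by simp [LN]

lemma contWithinAt_of_nhds {E : ℝ → ℝ} {x c : ℝ} {U : Set ℝ} (hU : U ∈ nhds x)
    (hx : x ∈ Set.Ico (0:ℝ) 1) (hE : ∀ y ∈ U ∩ Set.Ico (0:ℝ) 1, E y = y + c) :
    ContinuousWithinAt E (Set.Ico 0 1) x := by
  have heq : E =ᶠ[nhdsWithin x (Set.Ico 0 1)] fun y => y + c := by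
    filter_upwards [mem_nhdsWithin_of_mem_nhds hU, self_mem_nhdsWithin] with y h1 h2
    exact hE y ⟨h1, h2⟩
  have hcont : ContinuousWithinAt (fun y => y + c) (Set.Ico 0 1) x :=
    (continuous_id.add continuous_const).continuousWithinAt
  exact hcont.congr_of_eventuallyEq heq (hE x ⟨mem_of_mem_nhds hU, hx⟩)

lemma cont_interior {lam : Fin m → ℝ} (hpos : ∀ i, 0 < lam i) (hsum : ∑ i, lam i = 1)
    (π : Equiv.Perm (Fin m)) {n : ℕ} (hn : n < m) {x : ℝ}
    (h1 : LN m lam n < x) (h2 : x < LN m lam (n + 1)) :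
    ContinuousWithinAt (ietOf m lam π) (Set.Ico 0 1) x := by
  refine contWithinAt_of_nhds (c := cN m lam π n) (U := Set.Ioo (LN m lam n) (LN m lam (n+1)))
    (Ioo_mem_nhds h1 h2) ⟨?_, ?_⟩ ?_
  · exact le_trans (LN_nonneg hpos n) h1.le
  · exact lt_of_lt_of_le h2 (LN_le_one hpos hsum hn)
  · intro y hy
    exact ietOf_eval hpos π hn hy.1.1.le hy.1.2

lemma cont_zero {lam : Fin m → ℝ} (hpos : ∀ i, 0 < lam i) (hsum : ∑ i, lam i = 1)
    (π : Equiv.Perm (Fin m)) (hm : 0 < m) :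
    ContinuousWithinAt (ietOf m lam π) (Set.Ico 0 1) 0 := by
  have h01 : (0:ℝ) < LN m lam 1 := by
    have := LN_lt hpos hm; rwa [LN_zero] at this
  refine contWithinAt_of_nhds (c := cN m lam π 0) (U := Set.Iio (LN m lam 1)) (Iio_mem_nhds h01)
    ⟨le_refl 0, one_pos⟩ ?_
  intro y hy
  exact ietOf_eval hpos π hm (by rw [LN_zero]; exact hy.2.1) hy.1

lemma cont_merge {lam : Fin m → ℝ} (hpos : ∀ i, 0 < lam i) (hsum : ∑ i, lam i = 1)
    (π : Equiv.Perm (Fin m)) {n : ℕ} (hn1 : 1 ≤ n) (hn : n < m)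
    (hcq : cN m lam π (n - 1) = cN m lam π n) :
    ContinuousWithinAt (ietOf m lam π) (Set.Ico 0 1) (LN m lam n) := by
  have hsucc : n - 1 + 1 = n := Nat.succ_pred_eq_of_pos hn1
  have hprev : LN m lam (n - 1) < LN m lam n := by
    have := LN_lt hpos (lt_of_le_of_lt (Nat.sub_le n 1) hn)
    rwa [hsucc] at this
  have hnext : LN m lam n < LN m lam (n + 1) := LN_lt hpos hn
  refine contWithinAt_of_nhds (c := cN m lam π n) (U := Set.Ioo (LN m lam (n-1)) (LN m lam (n+1)))
    (Ioo_mem_nhds hprev (by linarith)) ⟨LN_nonneg hpos n, lt_of_lt_of_le hnext (LN_le_one hpos hsum hn)⟩ ?_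
  intro y hy
  rcases lt_or_ge y (LN m lam n) with h | h
  · have := ietOf_eval hpos π (lt_of_le_of_lt (Nat.sub_le n 1) hn) hy.1.1.le (by rwa [hsucc])
    rw [this, hcq]
  · exact ietOf_eval hpos π hn h hy.1.2

lemma discont_split {lam : Fin m → ℝ} (hpos : ∀ i, 0 < lam i) (hsum : ∑ i, lam i = 1)
    (π : Equiv.Perm (Fin m)) {n : ℕ} (hn1 : 1 ≤ n) (hn : n < m)
    (hcq : cN m lam π (n - 1) ≠ cN m lam π n) :
    ¬ ContinuousWithinAt (ietOf m lam π) (Set.Ico 0 1) (LN m lam n) := by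
  intro hcont
  set x := LN m lam n with hx
  have hsucc : n - 1 + 1 = n := Nat.succ_pred_eq_of_pos hn1
  have hprev : LN m lam (n - 1) < x := by
    have := LN_lt hpos (lt_of_le_of_lt (Nat.sub_le n 1) hn)
    rwa [hsucc] at this
  have hIoo : Set.Ioo (LN m lam (n-1)) x ∈ nhdsWithin x (Set.Iio x) :=
    Ioo_mem_nhdsLT_of_mem ⟨hprev, le_refl x⟩
  have hsub : Set.Ico (0:ℝ) 1 ∈ nhdsWithin x (Set.Iio x) := by
    filter_upwards [hIoo] with y hy
    constructor
    · exact le_of_lt (lt_of_le_of_lt (LN_nonneg hpos (n-1)) hy.1)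
    · exact lt_of_lt_of_le hy.2 (LN_le_one hpos hsum hn.le)
  have hle : nhdsWithin x (Set.Iio x) ≤ nhdsWithin x (Set.Ico 0 1) :=
    nhdsWithin_le_iff.2 hsub
  have h1 : Filter.Tendsto (ietOf m lam π) (nhdsWithin x (Set.Iio x))
      (nhds (ietOf m lam π x)) := hcont.mono_left hle
  have heq : ietOf m lam π =ᶠ[nhdsWithin x (Set.Iio x)]
      (fun y => y + cN m lam π (n-1)) := by
    filter_upwards [hIoo] with y hy
    exact ietOf_eval hpos π (lt_of_le_of_lt (Nat.sub_le n 1) hn) hy.1.le (by rw [hsucc]; exact hy.2)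
  have h2 : Filter.Tendsto (ietOf m lam π) (nhdsWithin x (Set.Iio x))
      (nhds (x + cN m lam π (n-1))) := by
    refine Filter.Tendsto.congr' heq.symm ?_
    exact ((continuous_id.add continuous_const).tendsto x).mono_left nhdsWithin_le_nhds
  have hEx : ietOf m lam π x = x + cN m lam π n :=
    ietOf_eval hpos π hn (le_refl x) (LN_lt hpos hn)
  have h3 := tendsto_nhds_unique h1 h2
  rw [hEx] at h3
  have : cN m lam π (n-1) = cN m lam π n := by linarith
  exact hcq this

lemma discont_char {lam : Fin m → ℝ} (hpos : ∀ i, 0 < lam i) (hsum : ∑ i, lam i = 1)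
    (π : Equiv.Perm (Fin m)) {x : ℝ} (hx : x ∈ Set.Ico (0:ℝ) 1) :
    ¬ ContinuousWithinAt (ietOf m lam π) (Set.Ico 0 1) x ↔
      ∃ n, 1 ≤ n ∧ n < m ∧ x = LN m lam n ∧ cN m lam π (n - 1) ≠ cN m lam π n := by
  constructor
  · intro hd
    obtain ⟨n, hn, h1, h2⟩ := exists_interval hsum hx
    rcases eq_or_lt_of_le h1 with he | hlt
    · rcases Nat.eq_zero_or_pos n with rfl | hn1
      · rw [LN_zero] at he
        exact absurd (he ▸ cont_zero hpos hsum π hn) hd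
      · by_cases hcq : cN m lam π (n - 1) = cN m lam π n
        · exact absurd (he ▸ cont_merge hpos hsum π hn1 hn hcq) hd
        · exact ⟨n, hn1, hn, he.symm, hcq⟩
    · exact absurd (cont_interior hpos hsum π hn hlt h2) hd
  · rintro ⟨n, hn1, hn, rfl, hcq⟩
    exact discont_split hpos hsum π hn1 hn hcq

end Cont
section Main
variable {m : ℕ}

theorem isIETm_of {lam : Fin m → ℝ} (hpos : ∀ i, 0 < lam i) (hsum : ∑ i, lam i = 1)
    (π : Equiv.Perm (Fin m)) (hm : 1 ≤ m)
    (hcons : ∀ n, n + 1 < m → cN m lam π n ≠ cN m lam π (n + 1)) :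
    IsIETm 1 m (ietOf m lam π) := by
  refine ⟨one_pos, hm, ietOf_bijOn hpos hsum π, fun i => LN m lam (i - 1), ?_, ?_, ?_, ?_, ?_⟩
  · simpa using LN_zero lam
  · simpa using LN_top hsum
  · intro i h1 h2
    have hn : i - 1 < m := by omega
    have hsucc : i - 1 + 1 = i := by omega
    have := LN_lt hpos hn
    rw [hsucc] at this
    simpa using this
  · intro i h1 h2 x hx
    have hn : i - 1 < m := by omega
    have hsucc : i - 1 + 1 = i := by omega
    have hx1 : LN m lam (i - 1) ≤ x := hx.1
    have hx2 : x < LN m lam (i - 1 + 1) := by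
      rw [hsucc]; simpa using hx.2
    have ha2 : LN m lam (i - 1) < LN m lam (i - 1 + 1) := LN_lt hpos hn
    rw [ietOf_eval hpos π hn hx1 hx2, ietOf_eval hpos π hn (le_refl _) ha2]
    ring
  · intro x hx
    rw [discont_char hpos hsum π hx]
    constructor
    · rintro ⟨n, hn1, hn, rfl, -⟩
      exact ⟨n + 1, by omega, by omega, by simp⟩
    · rintro ⟨i, hi2, him, rfl⟩
      have hsucc : i - 1 - 1 + 1 = i - 1 := by omega
      refine ⟨i - 1, by omega, by omega, rfl, ?_⟩
      have := hcons (i - 1 - 1) (by omega)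
      rwa [hsucc] at this

theorem hcons_of_isIETm {lam : Fin m → ℝ} (hpos : ∀ i, 0 < lam i) (hsum : ∑ i, lam i = 1)
    (π : Equiv.Perm (Fin m)) (hm : 2 ≤ m) (h : IsIETm 1 m (ietOf m lam π)) :
    ∀ n, n + 1 < m → cN m lam π n ≠ cN m lam π (n + 1) := by
  intro n0 hn0 heq
  obtain ⟨-, -, -, a, ha1, ham, hlt, -, hiff⟩ := h
  have hmono : ∀ i j, 1 ≤ i → i < j → j ≤ m + 1 → a i < a j := by
    intro i j h1 h2 h3
    induction j with
    | zero => omega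
    | succ J ih =>
      rcases Nat.lt_or_ge i J with hc | hc
      · exact lt_trans (ih hc (by omega)) (hlt J (by omega) (by omega))
      · have : i = J := by omega
        subst this
        exact hlt i (by omega) (by omega)
  have haIco : ∀ i, 2 ≤ i → i ≤ m → a i ∈ Set.Ico (0:ℝ) 1 := by
    intro i h2 h3
    constructor
    · rw [← ha1]; exact (hmono 1 i (le_refl 1) (by omega) (by omega)).le
    · rw [← ham]; exact hmono i (m + 1) (by omega) (by omega) (le_refl _)
  have key : ∀ i, 2 ≤ i → i ≤ m →
      ∃ n, 1 ≤ n ∧ n < m ∧ a i = LN m lam n ∧ n ≠ n0 + 1 := by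
    intro i h2 h3
    have hd : ¬ ContinuousWithinAt (ietOf m lam π) (Set.Ico 0 1) (a i) :=
      (hiff (a i) (haIco i h2 h3)).2 ⟨i, h2, h3, rfl⟩
    obtain ⟨n, hn1, hnm, hx, hcq⟩ := (discont_char hpos hsum π (haIco i h2 h3)).1 hd
    refine ⟨n, hn1, hnm, hx, ?_⟩
    rintro rfl
    exact hcq (by simpa using heq)
  classical
  set T : Finset ℝ := ((Finset.Ioo 0 m).erase (n0 + 1)).image (LN m lam) with hT
  have hsub : (Finset.Icc 2 m).image a ⊆ T := by
    intro x hx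
    obtain ⟨i, hi, rfl⟩ := Finset.mem_image.1 hx
    rw [Finset.mem_Icc] at hi
    obtain ⟨n, hn1, hnm, hx', hne⟩ := key i hi.1 hi.2
    rw [hT]
    refine Finset.mem_image.2 ⟨n, ?_, hx'.symm⟩
    rw [Finset.mem_erase, Finset.mem_Ioo]
    exact ⟨hne, by omega, hnm⟩
  have hinj : Set.InjOn a (Finset.Icc 2 m) := by
    intro i hi j hj hij
    rw [Finset.coe_Icc, Set.mem_Icc] at hi hj
    by_contra hne
    rcases Nat.lt_or_ge i j with hc | hc
    · exact absurd hij (ne_of_lt (hmono i j (by omega) hc (by omega)))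
    · exact absurd hij.symm (ne_of_lt (hmono j i (by omega) (by omega) (by omega)))
  have hc1 : ((Finset.Icc 2 m).image a).card = m - 1 := by
    rw [Finset.card_image_of_injOn hinj, Nat.card_Icc]
    omega
  have hc2 : T.card ≤ m - 2 := by
    rw [hT]
    refine le_trans Finset.card_image_le ?_
    rw [Finset.card_erase_of_mem (by rw [Finset.mem_Ioo]; omega), Nat.card_Ioo]
    omega
  have := Finset.card_le_card hsub
  omega

theorem memAk_iff {lam : Fin m → ℝ} (hpos : ∀ i, 0 < lam i) (hsum : ∑ i, lam i = 1)
    (π : Equiv.Perm (Fin m)) (hm : 2 ≤ m)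
    (hcons : ∀ n, n + 1 < m → cN m lam π n ≠ cN m lam π (n + 1)) (k : ℕ) :
    MemAk k (ietOf m lam π) ↔
      1 / 2 < lamN m lam 0 ∧
        cN m lam π 0 ∈ Set.Ioo ((16 : ℝ)⁻¹ ^ k - (32 : ℝ)⁻¹ ^ k)
          ((16 : ℝ)⁻¹ ^ k + (32 : ℝ)⁻¹ ^ k) := by
  have h0m : 0 < m := by omega
  have hLN1 : LN m lam 1 = lamN m lam 0 := by rw [LN_succ, LN_zero, zero_add]
  have hlam0 : 0 < lamN m lam 0 := by unfold lamN; rw [dif_pos h0m]; exact hpos _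
  constructor
  · rintro ⟨a0, ha0, hE⟩
    have hE0 : ietOf m lam π 0 = 0 + cN m lam π 0 :=
      ietOf_eval hpos π h0m (le_of_eq (LN_zero lam).symm) (by rw [hLN1]; exact hlam0)
    have hE0' : ietOf m lam π 0 = a0 + 0 := hE 0 ⟨le_refl 0, by norm_num⟩
    have hac : cN m lam π 0 = a0 := by linarith
    refine ⟨?_, by rw [hac]; exact ha0⟩
    by_contra hle
    push_neg at hle
    have hx : LN m lam 1 ∈ Set.Icc (0:ℝ) (1/2) := by
      rw [hLN1]
      exact ⟨hlam0.le, hle⟩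
    have h1m : 1 < m := by omega
    have hEx : ietOf m lam π (LN m lam 1) = LN m lam 1 + cN m lam π 1 :=
      ietOf_eval hpos π h1m (le_refl _) (LN_lt hpos h1m)
    have hEx' : ietOf m lam π (LN m lam 1) = a0 + LN m lam 1 := hE _ hx
    have : cN m lam π 0 = cN m lam π 1 := by rw [hac]; linarith
    exact hcons 0 (by omega) this
  · rintro ⟨h12, hIoo⟩
    refine ⟨cN m lam π 0, hIoo, fun x hx => ?_⟩
    have hx2 : x < LN m lam 1 := by rw [hLN1]; linarith [hx.2]
    have := ietOf_eval hpos π h0m (by rw [LN_zero]; exact hx.1) hx2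
    rw [this]; ring

end Main
section Param
variable {m : ℕ}

lemma completeVec_sum {M : ℕ} (v : Fin (M + 1 - 1) → ℝ) :
    ∑ i, completeVec (M + 1) v i = 1 := by
  rw [Fin.sum_univ_castSucc]
  have h1 : ∀ i : Fin M, completeVec (M + 1) v i.castSucc = v i := by
    intro i
    unfold completeVec
    rw [dif_pos (show ((i.castSucc : Fin (M+1)) : ℕ) < M + 1 - 1 from i.isLt)]
    rfl
  have h2 : completeVec (M + 1) v (Fin.last M) = 1 - ∑ j, v j := by
    unfold completeVec
    rw [dif_neg (by simp)]
  rw [h2, Finset.sum_congr rfl fun i _ => h1 i]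
  ring

lemma completeVec_mem_iff {M : ℕ} (v : Fin (M + 1 - 1) → ℝ) :
    completeVec (M + 1) v ∈ posSimplex (M + 1) ↔ ∀ i, 0 < completeVec (M + 1) v i := by
  constructor
  · exact fun h => h.1
  · exact fun h => ⟨h, completeVec_sum v⟩

lemma cont_completeVec_coord (m : ℕ) (j : Fin m) :
    Continuous (fun v : Fin (m - 1) → ℝ => completeVec m v j) := by
  unfold completeVec
  by_cases h : (j : ℕ) < m - 1
  · simp only [dif_pos h]
    exact continuous_apply _
  · simp only [dif_neg h]
    exact continuous_const.sub (continuous_finset_sum _ fun i _ => continuous_apply i)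

lemma cont_lamN (m : ℕ) (n : ℕ) :
    Continuous (fun v : Fin (m - 1) → ℝ => lamN m (completeVec m v) n) := by
  unfold lamN
  by_cases h : n < m
  · simp only [dif_pos h]
    exact cont_completeVec_coord m _
  · simp only [dif_neg h]
    exact continuous_const

lemma cont_cN (m : ℕ) (π : Equiv.Perm (Fin m)) (n : ℕ) :
    Continuous (fun v : Fin (m - 1) → ℝ => cN m (completeVec m v) π n) := by
  unfold cN
  by_cases h : n < m
  · simp only [dif_pos h]
    unfold imageLeftEndpoint leftEndpoint
    exact (continuous_finset_sum _ fun i _ => cont_completeVec_coord m i).sub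
      (continuous_finset_sum _ fun i _ => cont_completeVec_coord m i)
  · simp only [dif_neg h]
    exact continuous_const

def Uset (m k : ℕ) (π : Equiv.Perm (Fin m)) : Set (Fin (m - 1) → ℝ) :=
  {v | (∀ i, 0 < completeVec m v i) ∧ 1 / 2 < lamN m (completeVec m v) 0 ∧
    cN m (completeVec m v) π 0 ∈ Set.Ioo ((16 : ℝ)⁻¹ ^ k - (32 : ℝ)⁻¹ ^ k)
      ((16 : ℝ)⁻¹ ^ k + (32 : ℝ)⁻¹ ^ k) ∧
    ∀ n, n + 1 < m → cN m (completeVec m v) π n ≠ cN m (completeVec m v) π (n + 1)}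

lemma Uset_open (m k : ℕ) (π : Equiv.Perm (Fin m)) : IsOpen (Uset m k π) := by
  have h1 : IsOpen {v : Fin (m-1) → ℝ | ∀ i, 0 < completeVec m v i} := by
    rw [show {v : Fin (m-1) → ℝ | ∀ i, 0 < completeVec m v i}
        = ⋂ i : Fin m, {v | 0 < completeVec m v i} by ext v; simp]
    exact isOpen_iInter_of_finite fun i =>
      isOpen_lt continuous_const (cont_completeVec_coord m i)
  have h2 : IsOpen {v : Fin (m-1) → ℝ | 1 / 2 < lamN m (completeVec m v) 0} :=
    isOpen_lt continuous_const (cont_lamN m 0)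
  have h3 : IsOpen {v : Fin (m-1) → ℝ |
      cN m (completeVec m v) π 0 ∈ Set.Ioo ((16 : ℝ)⁻¹ ^ k - (32 : ℝ)⁻¹ ^ k)
        ((16 : ℝ)⁻¹ ^ k + (32 : ℝ)⁻¹ ^ k)} :=
    IsOpen.preimage (cont_cN m π 0) isOpen_Ioo
  have h4 : IsOpen {v : Fin (m-1) → ℝ |
      ∀ n, n + 1 < m → cN m (completeVec m v) π n ≠ cN m (completeVec m v) π (n + 1)} := by
    rw [show {v : Fin (m-1) → ℝ |
        ∀ n, n + 1 < m → cN m (completeVec m v) π n ≠ cN m (completeVec m v) π (n + 1)}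
        = ⋂ n : Fin m, {v | (n : ℕ) + 1 < m →
            cN m (completeVec m v) π n ≠ cN m (completeVec m v) π ((n : ℕ) + 1)} by
      ext v
      simp only [Set.mem_setOf_eq, Set.mem_iInter]
      exact ⟨fun h n hn => h n hn, fun h n hn => h ⟨n, by omega⟩ hn⟩]
    refine isOpen_iInter_of_finite fun n => ?_
    by_cases h : (n : ℕ) + 1 < m
    · rw [show {v : Fin (m-1) → ℝ | (n : ℕ) + 1 < m →
          cN m (completeVec m v) π n ≠ cN m (completeVec m v) π ((n : ℕ) + 1)}
          = {v | cN m (completeVec m v) π n ≠ cN m (completeVec m v) π ((n : ℕ) + 1)} by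
        ext v; simp [h]]
      exact isOpen_ne_fun (cont_cN m π n) (cont_cN m π _)
    · rw [show {v : Fin (m-1) → ℝ | (n : ℕ) + 1 < m →
          cN m (completeVec m v) π n ≠ cN m (completeVec m v) π ((n : ℕ) + 1)}
          = Set.univ by ext v; simp [h]]
      exact isOpen_univ
  have heq : Uset m k π = {v : Fin (m-1) → ℝ | ∀ i, 0 < completeVec m v i} ∩
      ({v : Fin (m-1) → ℝ | 1 / 2 < lamN m (completeVec m v) 0} ∩
        ({v : Fin (m-1) → ℝ |
          cN m (completeVec m v) π 0 ∈ Set.Ioo ((16 : ℝ)⁻¹ ^ k - (32 : ℝ)⁻¹ ^ k)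
            ((16 : ℝ)⁻¹ ^ k + (32 : ℝ)⁻¹ ^ k)} ∩
          {v : Fin (m-1) → ℝ | ∀ n, n + 1 < m →
            cN m (completeVec m v) π n ≠ cN m (completeVec m v) π (n + 1)})) := rfl
  rw [heq]
  exact h1.inter (h2.inter (h3.inter h4))

end Param
section Rev
variable {m : ℕ}

lemma imageLeft_rev (lam : Fin m → ℝ) (i : Fin m) :
    imageLeftEndpoint m lam Fin.revPerm i
      = ∑ j ∈ Finset.univ.filter (fun j => i < j), lam j := by
  unfold imageLeftEndpoint
  congr 1
  ext j
  simp [Fin.rev_lt_rev]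

lemma sum_split {lam : Fin m → ℝ} (hsum : ∑ i, lam i = 1) (i : Fin m) :
    leftEndpoint m lam i + lam i + imageLeftEndpoint m lam Fin.revPerm i = 1 := by
  classical
  rw [imageLeft_rev]
  unfold leftEndpoint
  have h := Finset.sum_filter_add_sum_filter_not Finset.univ (fun j : Fin m => j < i) lam
  have h2 : Finset.univ.filter (fun j : Fin m => ¬ j < i) =
      insert i (Finset.univ.filter (fun j => i < j)) := by
    ext j
    simp only [Finset.mem_filter, Finset.mem_univ, true_and, Finset.mem_insert, not_lt]
    constructor
    · intro hij
      rcases eq_or_lt_of_le hij with he | hl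
      · exact Or.inl he.symm
      · exact Or.inr hl
    · rintro (rfl | hl)
      · exact le_refl _
      · exact hl.le
  rw [h2, Finset.sum_insert (by simp)] at h
  rw [hsum] at h
  linarith

lemma cN_rev {lam : Fin m → ℝ} (hsum : ∑ i, lam i = 1) {n : ℕ} (hn : n < m) :
    cN m lam Fin.revPerm n = 1 - lamN m lam n - 2 * LN m lam n := by
  unfold cN
  rw [dif_pos hn]
  have h1 := sum_split hsum ⟨n, hn⟩
  have h2 := leftEndpoint_eq lam ⟨n, hn⟩
  have h3 : lamN m lam n = lam ⟨n, hn⟩ := lamN_val lam ⟨n, hn⟩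
  have h4 : LN m lam ((⟨n, hn⟩ : Fin m) : ℕ) = LN m lam n := rfl
  rw [h4] at h2
  linarith

lemma rev_hcons {lam : Fin m → ℝ} (hpos : ∀ i, 0 < lam i) (hsum : ∑ i, lam i = 1) :
    ∀ n, n + 1 < m → cN m lam Fin.revPerm n ≠ cN m lam Fin.revPerm (n + 1) := by
  intro n hn heq
  rw [cN_rev hsum (by omega), cN_rev hsum hn, LN_succ] at heq
  have p1 : 0 < lamN m lam n := by unfold lamN; rw [dif_pos (by omega : n < m)]; exact hpos _
  have p2 : 0 < lamN m lam (n + 1) := by unfold lamN; rw [dif_pos hn]; exact hpos _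
  linarith

lemma cN_rev_zero {lam : Fin m → ℝ} (hsum : ∑ i, lam i = 1) (hm : 0 < m) :
    cN m lam Fin.revPerm 0 = 1 - lamN m lam 0 := by
  rw [cN_rev hsum hm, LN_zero]
  ring

end Rev

section Char

lemma completeVec_sum' (m : ℕ) (hm : 1 ≤ m) (v : Fin (m - 1) → ℝ) :
    ∑ i, completeVec m v i = 1 := by
  obtain ⟨M, rfl⟩ : ∃ M, m = M + 1 := ⟨m - 1, by omega⟩
  exact completeVec_sum v

lemma mem_S_iff (m k : ℕ) (hm : 2 ≤ m) (v : Fin (m - 1) → ℝ)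
    (π : Equiv.Perm (Fin m)) :
    (completeVec m v ∈ posSimplex m ∧
      IsIETm 1 m (ietOf m (completeVec m v) π) ∧
      MemAk k (ietOf m (completeVec m v) π)) ↔ v ∈ Uset m k π := by
  constructor
  · rintro ⟨hps, hiet, hak⟩
    have hpos := hps.1
    have hsum := hps.2
    have hcons := hcons_of_isIETm hpos hsum π hm hiet
    obtain ⟨h12, hIoo⟩ := (memAk_iff hpos hsum π hm hcons k).1 hak
    exact ⟨hpos, h12, hIoo, hcons⟩
  · rintro ⟨hpos, h12, hIoo, hcons⟩
    have hsum := completeVec_sum' m (by omega) v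
    exact ⟨⟨hpos, hsum⟩, isIETm_of hpos hsum π (by omega) hcons,
      (memAk_iff hpos hsum π hm hcons k).2 ⟨h12, hIoo⟩⟩

lemma completeVec_lt {M : ℕ} (v : Fin (M + 1) → ℝ) (j : Fin (M + 2))
    (h : (j : ℕ) < M + 1) : completeVec (M + 2) v j = v ⟨(j : ℕ), h⟩ := by
  unfold completeVec
  exact dif_pos h

lemma completeVec_last {M : ℕ} (v : Fin (M + 1) → ℝ) (j : Fin (M + 2))
    (h : ¬ (j : ℕ) < M + 1) : completeVec (M + 2) v j = 1 - ∑ i, v i := by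
  unfold completeVec
  exact dif_neg h

lemma Uset_nonempty (M k : ℕ) (hk : 1 ≤ k) :
    (Uset (M + 2) k Fin.revPerm).Nonempty := by
  classical
  set c : ℝ := (16 : ℝ)⁻¹ ^ k with hcdef
  set δ : ℝ := c / (2 * ((M : ℝ) + 2)) with hδdef
  have hc0 : 0 < c := pow_pos (by norm_num) k
  have hc16 : c ≤ 1 / 16 := by
    have : (16 : ℝ)⁻¹ ^ k ≤ (16 : ℝ)⁻¹ ^ 1 :=
      pow_le_pow_of_le_one (by norm_num) (by norm_num) hk
    simpa [hcdef] using this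
  have hden : (0:ℝ) < 2 * ((M:ℝ) + 2) := by positivity
  have hδ0 : 0 < δ := div_pos hc0 hden
  have hδe : δ * (2 * ((M:ℝ) + 2)) = c := by
    rw [hδdef]; field_simp
  have hMδ : (M : ℝ) * δ < c := by
    rw [← hδe]
    nlinarith [Nat.cast_nonneg (α := ℝ) M]
  set v : Fin (M + 1) → ℝ := fun i => if (i : ℕ) = 0 then 1 - c else δ with hvdef
  have hv0 : ∀ i : Fin (M + 1), (i : ℕ) = 0 → v i = 1 - c := by
    intro i hi; rw [hvdef]; simp [hi]
  have hv1 : ∀ i : Fin (M + 1), (i : ℕ) ≠ 0 → v i = δ := by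
    intro i hi; rw [hvdef]; simp [hi]
  have hsv : ∑ i, v i = (1 - c) + M * δ := by
    rw [Fin.sum_univ_succ]
    have h0 : v 0 = 1 - c := hv0 0 rfl
    have hs : ∀ i : Fin M, v i.succ = δ := fun i => hv1 i.succ (Fin.val_succ i ▸ (Nat.succ_ne_zero i))
    rw [h0, Finset.sum_congr rfl fun i _ => hs i, Finset.sum_const, Finset.card_univ,
      Fintype.card_fin, nsmul_eq_mul]
  have hpos : ∀ j : Fin (M + 2), 0 < completeVec (M + 2) v j := by
    intro j
    by_cases h : (j : ℕ) < M + 1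
    · rw [completeVec_lt v j h]
      by_cases h0 : (j : ℕ) = 0
      · rw [hv0 ⟨(j : ℕ), h⟩ h0]; linarith
      · rw [hv1 ⟨(j : ℕ), h⟩ h0]; exact hδ0
    · rw [completeVec_last v j h, hsv]
      linarith
  have hsum : ∑ i, completeVec (M + 2) v i = 1 := completeVec_sum v
  have hl : lamN (M + 2) (completeVec (M + 2) v) 0 = 1 - c := by
    have h2 : (0 : ℕ) < M + 2 := by omega
    unfold lamN
    rw [dif_pos h2, completeVec_lt v ⟨0, h2⟩ (show (0:ℕ) < M + 1 by omega), hv0 _ rfl]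
  refine ⟨v, hpos, ?_, ?_, rev_hcons hpos hsum⟩
  · rw [hl]; linarith
  · rw [cN_rev_zero hsum (by omega), hl]
    have h32 : (0:ℝ) < (32 : ℝ)⁻¹ ^ k := pow_pos (by norm_num) k
    constructor
    · rw [hcdef]; linarith
    · rw [hcdef]; linarith

end Char
/-- For every `m ≥ 2` and `k ≥ 1`, the set `A_k ⊆ Δ_m × 𝔖_m` is open and has
positive measure, for the product of the (subspace) topology and `(m-1)`-dimensional Lebesgue
measure on `Δ_m` (via the parametrization of `Δ_m` by its first `m - 1` coordinates) with the
discrete topology and counting measure on `𝔖_m`. -/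
theorem Ak_isOpen_and_pos_measure (m k : ℕ) (hm : 2 ≤ m) (hk : 1 ≤ k) :
    IsOpen {p : (Fin (m - 1) → ℝ) × Equiv.Perm (Fin m) |
        completeVec m p.1 ∈ posSimplex m ∧
        IsIETm 1 m (ietOf m (completeVec m p.1) p.2) ∧
        MemAk k (ietOf m (completeVec m p.1) p.2)} ∧
    0 < (Measure.prod (volume : Measure (Fin (m - 1) → ℝ))
        (Measure.count : Measure (Equiv.Perm (Fin m))))
      {p : (Fin (m - 1) → ℝ) × Equiv.Perm (Fin m) |
        completeVec m p.1 ∈ posSimplex m ∧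
        IsIETm 1 m (ietOf m (completeVec m p.1) p.2) ∧
        MemAk k (ietOf m (completeVec m p.1) p.2)} := by
  obtain ⟨M, rfl⟩ : ∃ M, m = M + 2 := ⟨m - 2, by omega⟩
  have hSeq : {p : (Fin (M + 2 - 1) → ℝ) × Equiv.Perm (Fin (M + 2)) |
        completeVec (M + 2) p.1 ∈ posSimplex (M + 2) ∧
        IsIETm 1 (M + 2) (ietOf (M + 2) (completeVec (M + 2) p.1) p.2) ∧
        MemAk k (ietOf (M + 2) (completeVec (M + 2) p.1) p.2)}
      = ⋃ π : Equiv.Perm (Fin (M + 2)),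
          (Uset (M + 2) k π) ×ˢ ({π} : Set (Equiv.Perm (Fin (M + 2)))) := by
    ext ⟨v, π⟩
    simp only [Set.mem_setOf_eq, Set.mem_iUnion, Set.mem_prod, Set.mem_singleton_iff]
    constructor
    · intro h
      exact ⟨π, (mem_S_iff (M + 2) k (by omega) v π).1 h, rfl⟩
    · rintro ⟨π', hU, rfl⟩
      exact (mem_S_iff (M + 2) k (by omega) v _).2 hU
  constructor
  · rw [hSeq]
    exact isOpen_iUnion fun π => (Uset_open (M + 2) k π).prod (isOpen_discrete _)
  · have hsub : (Uset (M + 2) k Fin.revPerm) ×ˢ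
        ({Fin.revPerm} : Set (Equiv.Perm (Fin (M + 2)))) ⊆
        {p : (Fin (M + 2 - 1) → ℝ) × Equiv.Perm (Fin (M + 2)) |
          completeVec (M + 2) p.1 ∈ posSimplex (M + 2) ∧
          IsIETm 1 (M + 2) (ietOf (M + 2) (completeVec (M + 2) p.1) p.2) ∧
          MemAk k (ietOf (M + 2) (completeVec (M + 2) p.1) p.2)} := by
      rw [hSeq]
      exact Set.subset_iUnion
        (fun π : Equiv.Perm (Fin (M + 2)) =>
          (Uset (M + 2) k π) ×ˢ ({π} : Set (Equiv.Perm (Fin (M + 2))))) Fin.revPerm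
    have h2 : (Measure.prod (volume : Measure (Fin (M + 2 - 1) → ℝ))
        (Measure.count : Measure (Equiv.Perm (Fin (M + 2)))))
        ((Uset (M + 2) k Fin.revPerm) ×ˢ ({Fin.revPerm} : Set (Equiv.Perm (Fin (M + 2)))))
        = volume (Uset (M + 2) k Fin.revPerm) := by
      rw [Measure.prod_prod, Measure.count_singleton, mul_one]
    have h1 : (0 : ENNReal) < volume (Uset (M + 2) k Fin.revPerm) :=
      IsOpen.measure_pos volume (Uset_open (M + 2) k Fin.revPerm) (Uset_nonempty M k hk)
    calc (0 : ENNReal) < volume (Uset (M + 2) k Fin.revPerm) := h1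
      _ = _ := h2.symm
      _ ≤ _ := measure_mono hsub
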